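/- The quadratic form q(x) = 4∑_{j∈Δ_0^-} x_j² − ∑_{i∈Δ_0^+} (∑_{j∈Δ_0^-} a_{ij} x_j)² associated to a bipartite orientation of the Dynkin diagram A_n (with sinks and sources alternating) is positive definite. -/

import Mathlib

open Finset in
/-- Let `Δ` be a bipartite orientation of the Dynkin diagram `A_n`: every vertex is a
source (`σ i = true`) or a sink (`σ i = false`), and adjacent vertices have opposite
types, so arrows go from sources to sinks along the edges of the path `1 — 2 — ⋯ — n`.
The quadratic form
`q(x) = 4 ∑_{j sinks} x_j² − ∑_{i sources} (∑_{j sinks adjacent to i} x_j)²`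
on real vectors indexed by the sinks is positive definite. -/
theorem stmt_10 (n : ℕ) (σ : Fin n → Bool)
    (halt : ∀ i j : Fin n, (i : ℕ) + 1 = (j : ℕ) → σ i ≠ σ j)
    (x : {j : Fin n // σ j = false} → ℝ) (hx : x ≠ 0) :
    0 < 4 * ∑ j : {j : Fin n // σ j = false}, x j ^ 2 -
        ∑ i : {i : Fin n // σ i = true},
          (∑ j : {j : Fin n // σ j = false},
            if ((i : Fin n) : ℕ) + 1 = ((j : Fin n) : ℕ) ∨
               ((j : Fin n) : ℕ) + 1 = ((i : Fin n) : ℕ) then x j else 0) ^ 2 := by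
  classical
  set F : ℕ → ℝ := fun m => ∑ j : {j : Fin n // σ j = false},
      if ((j : Fin n) : ℕ) + 1 = m then x j else 0 with hF
  have hFzero : ∀ m, (∀ j : {j : Fin n // σ j = false}, ((j : Fin n) : ℕ) + 1 = m → x j = 0) →
      F m = 0 := by
    intro m h
    refine Finset.sum_eq_zero fun j _ => ?_
    by_cases hj : ((j : Fin n) : ℕ) + 1 = m
    · simp [hj, h j hj]
    · simp [hj]
  have hF0 : F 0 = 0 := hFzero 0 (by intro j h; omega)
  have hFbig : ∀ m, n < m → F m = 0 := fun m hm =>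
    hFzero m (by intro j h; have := (j : Fin n).isLt; omega)
  have hFeval : ∀ j : {j : Fin n // σ j = false}, F (((j : Fin n) : ℕ) + 1) = x j := by
    intro j
    have h : ∑ b : {j : Fin n // σ j = false},
        (if ((b : Fin n) : ℕ) + 1 = ((j : Fin n) : ℕ) + 1 then x b else 0)
        = if ((j : Fin n) : ℕ) + 1 = ((j : Fin n) : ℕ) + 1 then x j else 0 := by
      refine Finset.sum_eq_single j (fun b _ hb => ?_) (fun h => absurd (Finset.mem_univ _) h)
      by_cases hcond : ((b : Fin n) : ℕ) + 1 = ((j : Fin n) : ℕ) + 1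
      · exact absurd (Subtype.ext (Fin.ext (by omega))) hb
      · rw [if_neg hcond]
    simp only [hF]
    rw [h, if_pos rfl]
  -- square of F m as a sum
  have hsq : ∀ m, F m ^ 2 = ∑ j : {j : Fin n // σ j = false},
      (if ((j : Fin n) : ℕ) + 1 = m then x j ^ 2 else 0) := by
    intro m
    by_cases hm : ∃ j : {j : Fin n // σ j = false}, ((j : Fin n) : ℕ) + 1 = m
    · obtain ⟨j0, hj0⟩ := hm
      subst hj0
      rw [hFeval j0]
      have h : ∑ b : {j : Fin n // σ j = false},
          (if ((b : Fin n) : ℕ) + 1 = ((j0 : Fin n) : ℕ) + 1 then x b ^ 2 else 0)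
          = if ((j0 : Fin n) : ℕ) + 1 = ((j0 : Fin n) : ℕ) + 1 then x j0 ^ 2 else 0 := by
        refine Finset.sum_eq_single j0 (fun b _ hb => ?_) (fun h => absurd (Finset.mem_univ _) h)
        by_cases hcond : ((b : Fin n) : ℕ) + 1 = ((j0 : Fin n) : ℕ) + 1
        · exact absurd (Subtype.ext (Fin.ext (by omega))) hb
        · rw [if_neg hcond]
      rw [h, if_pos rfl]
    · push_neg at hm
      rw [hFzero m (fun j h => absurd h (hm j))]
      rw [Finset.sum_eq_zero fun j _ => by simp [hm j]]
      ring
  -- total sum of squares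
  have S1 : ∑ m ∈ range (n + 2), F m ^ 2 = ∑ j : {j : Fin n // σ j = false}, x j ^ 2 := by
    simp only [hsq]
    rw [Finset.sum_comm]
    refine Finset.sum_congr rfl fun j _ => ?_
    rw [Finset.sum_ite_eq (range (n + 2)) (((j : Fin n) : ℕ) + 1) (fun _ => x j ^ 2)]
    have : ((j : Fin n) : ℕ) + 1 ∈ range (n + 2) := by
      have := (j : Fin n).isLt
      exact Finset.mem_range.mpr (by omega)
    simp [this]
  -- rewrite the source sums
  have hsrc : ∀ i : {i : Fin n // σ i = true},
      (∑ j : {j : Fin n // σ j = false},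
        if ((i : Fin n) : ℕ) + 1 = ((j : Fin n) : ℕ) ∨
           ((j : Fin n) : ℕ) + 1 = ((i : Fin n) : ℕ) then x j else 0)
      = F ((i : Fin n) : ℕ) + F (((i : Fin n) : ℕ) + 2) := by
    intro i
    rw [hF, ← Finset.sum_add_distrib]
    refine Finset.sum_congr rfl fun j _ => ?_
    by_cases hA : ((i : Fin n) : ℕ) + 1 = ((j : Fin n) : ℕ)
    · have hB : ¬(((j : Fin n) : ℕ) + 1 = ((i : Fin n) : ℕ)) := by omega
      have hA2 : ((j : Fin n) : ℕ) + 1 = ((i : Fin n) : ℕ) + 2 := by omega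
      simp [hA, hB, hA2]
    · by_cases hB : ((j : Fin n) : ℕ) + 1 = ((i : Fin n) : ℕ)
      · have hA2 : ¬(((j : Fin n) : ℕ) + 1 = ((i : Fin n) : ℕ) + 2) := by omega
        simp [hA, hB, hA2]
      · have hA2 : ¬(((j : Fin n) : ℕ) + 1 = ((i : Fin n) : ℕ) + 2) := by omega
        simp [hA, hB, hA2]
        exact fun h => absurd h (by omega)
  -- the key algebraic identity
  have hA : ∑ t ∈ range (n + 2), F (t - 1) ^ 2 = ∑ m ∈ range (n + 2), F m ^ 2 := by
    rw [Finset.sum_range_succ' (fun t => F (t - 1) ^ 2) (n + 1)]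
    simp only [Nat.add_sub_cancel]
    rw [Finset.sum_range_succ (fun m => F m ^ 2) (n + 1), hFbig (n + 1) (by omega), hF0]
  have hB : ∑ t ∈ range (n + 2), F (t + 1) ^ 2 = ∑ m ∈ range (n + 2), F m ^ 2 := by
    have h3 : ∑ m ∈ range (n + 3), F m ^ 2 = (∑ t ∈ range (n + 2), F (t + 1) ^ 2) + F 0 ^ 2 :=
      Finset.sum_range_succ' (fun m => F m ^ 2) (n + 2)
    have h4 : ∑ m ∈ range (n + 3), F m ^ 2 = (∑ m ∈ range (n + 2), F m ^ 2) + F (n + 2) ^ 2 :=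
      Finset.sum_range_succ _ (n + 2)
    rw [hFbig (n + 2) (by omega)] at h4
    rw [hF0] at h3
    nlinarith [h3, h4]
  have key : 4 * ∑ m ∈ range (n + 2), F m ^ 2 =
      (∑ t ∈ range (n + 2), (F (t - 1) + F (t + 1)) ^ 2) +
      (∑ t ∈ range (n + 2), (F (t - 1) - F (t + 1)) ^ 2) := by
    rw [← Finset.sum_add_distrib]
    have : ∀ t ∈ range (n + 2), (F (t - 1) + F (t + 1)) ^ 2 + (F (t - 1) - F (t + 1)) ^ 2
        = 2 * F (t - 1) ^ 2 + 2 * F (t + 1) ^ 2 := fun t _ => by ring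
    rw [Finset.sum_congr rfl this, Finset.sum_add_distrib, ← Finset.mul_sum, ← Finset.mul_sum,
      hA, hB]
    ring
  -- the source sum is a subsum
  have hsub : ∑ i : {i : Fin n // σ i = true}, (F ((i : Fin n) : ℕ) + F (((i : Fin n) : ℕ) + 2)) ^ 2
      ≤ ∑ t ∈ range (n + 2), (F (t - 1) + F (t + 1)) ^ 2 := by
    have step1 : ∑ i : {i : Fin n // σ i = true},
        (F ((i : Fin n) : ℕ) + F (((i : Fin n) : ℕ) + 2)) ^ 2
        = ∑ t ∈ (univ : Finset {i : Fin n // σ i = true}).image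
            (fun i : {i : Fin n // σ i = true} => ((i : Fin n) : ℕ) + 1),
            (F (t - 1) + F (t + 1)) ^ 2 := by
      rw [Finset.sum_image (fun a _ b _ hab => Subtype.ext (Fin.ext (by omega)))]
      refine Finset.sum_congr rfl fun i _ => ?_
      simp
    rw [step1]
    refine Finset.sum_le_sum_of_subset_of_nonneg ?_ (fun t _ _ => sq_nonneg _)
    intro t ht
    simp only [Finset.mem_image, Finset.mem_univ, true_and] at ht
    obtain ⟨i, hi⟩ := ht
    have := (i : Fin n).isLt
    exact Finset.mem_range.mpr (by omega)
  -- strict positivity of the difference sum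
  have hxj : ∃ j : {j : Fin n // σ j = false}, x j ≠ 0 := Function.ne_iff.mp hx
  obtain ⟨j1, hj1⟩ := hxj
  obtain ⟨j0, hj0mem, hj0max⟩ := Finset.exists_max_image
    ((univ : Finset {j : Fin n // σ j = false}).filter fun j => x j ≠ 0)
    (fun j => ((j : Fin n) : ℕ)) ⟨j1, by simp [hj1]⟩
  have hj0 : x j0 ≠ 0 := (Finset.mem_filter.mp hj0mem).2
  have hmax : ∀ j : {j : Fin n // σ j = false}, x j ≠ 0 → ((j : Fin n) : ℕ) ≤ ((j0 : Fin n) : ℕ) :=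
    fun j hj => hj0max j (Finset.mem_filter.mpr ⟨Finset.mem_univ _, hj⟩)
  have hF3 : F (((j0 : Fin n) : ℕ) + 3) = 0 := by
    refine hFzero _ fun j h => ?_
    by_contra hxj
    have := hmax j hxj
    omega
  have hterm : 0 < (F ((((j0 : Fin n) : ℕ) + 2) - 1) - F ((((j0 : Fin n) : ℕ) + 2) + 1)) ^ 2 := by
    have h1 : (((j0 : Fin n) : ℕ) + 2) - 1 = ((j0 : Fin n) : ℕ) + 1 := by omega
    have h2 : (((j0 : Fin n) : ℕ) + 2) + 1 = ((j0 : Fin n) : ℕ) + 3 := by omega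
    rw [h1, h2, hFeval j0, hF3, sub_zero]
    rcases hj0.lt_or_gt with h | h <;> nlinarith
  have hdiff : 0 < ∑ t ∈ range (n + 2), (F (t - 1) - F (t + 1)) ^ 2 := by
    refine Finset.sum_pos' (fun t _ => sq_nonneg _) ⟨((j0 : Fin n) : ℕ) + 2, ?_, hterm⟩
    have := (j0 : Fin n).isLt
    exact Finset.mem_range.mpr (by omega)
  -- put everything together
  have hrw : ∑ i : {i : Fin n // σ i = true},
      (∑ j : {j : Fin n // σ j = false},
        if ((i : Fin n) : ℕ) + 1 = ((j : Fin n) : ℕ) ∨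
           ((j : Fin n) : ℕ) + 1 = ((i : Fin n) : ℕ) then x j else 0) ^ 2
      = ∑ i : {i : Fin n // σ i = true},
          (F ((i : Fin n) : ℕ) + F (((i : Fin n) : ℕ) + 2)) ^ 2 :=
    Finset.sum_congr rfl fun i _ => by rw [hsrc i]
  rw [hrw, ← S1]
  linarith [key, hsub, hdiff]
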